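/- (Lemma on small pods.) There is a function φ : (0,1/2] → [0,∞) with φ(σ) → 0 as σ → 0, such that if p̃ and q̃ are pods each of dimension (max of length and diameter) at most σ, then the corresponding standard pods p, q satisfy Δ(p,q) ≤ φ(σ). Concretely, one may take φ(σ) = 2σ/(σ^{2/3} − σ²) + Σ_{n ≥ σ^{-1/3}} 2^{-n}. -/

import Mathlib

open Set Filter Topology

/-- A path of Π′: a continuous real path starting at time `t0 ∈ [0,1]` from a point of `[-1,1]`,
represented by its extension to `[0,∞)` (constant equal to `f t0` before `t0`). -/
structure PathP where
  t0 : ℝ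
  f : ℝ → ℝ
  ht0 : t0 ∈ Set.Icc (0:ℝ) 1
  hf : Continuous f
  hconst : ∀ t ≤ t0, f t = f t0
  hstart : f t0 ∈ Set.Icc (-1:ℝ) 1

/-- `sup_{t ∈ [0,n+1]} |f̂(t) - ĝ(t)|`. -/
noncomputable def supAbs (γ η : PathP) (n : ℕ) : ℝ :=
  ⨆ t : Set.Icc (0:ℝ) ((n:ℝ)+1), |γ.f t - η.f t|

/-- The sup-type metric d′ on Π′. -/
noncomputable def dprime (γ η : PathP) : ℝ :=
  max |γ.t0 - η.t0| (∑' n : ℕ, (2:ℝ)⁻¹ ^ (n+1) * min (supAbs γ η n) 1)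

/-- The set `{t > t⁺ : f₁(t) = f₂(t)}` whose infimum is the coalescence time. -/
def coalSet (γ η : PathP) : Set ℝ :=
  {t : ℝ | max γ.t0 η.t0 < t ∧ γ.f t = η.f t}

/-- The pair coalesces: either `t^c = ∞` or the two paths agree from `t^c` on. -/
def Coalesces (γ η : PathP) : Prop :=
  coalSet γ η = ∅ ∨ ∀ t, sInf (coalSet γ η) ≤ t → γ.f t = η.f t

/-- An ordered coalescing pair of paths: an element of the space 𝒞. -/
structure CoalPair where
  p1 : PathP
  p2 : PathP
  ordered : ∀ t, max p1.t0 p2.t0 ≤ t → p1.f t ≤ p2.f t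
  coal : Coalesces p1 p2

/-- The beginning `t⁺` of the pod. -/
noncomputable def tPlus (F : CoalPair) : ℝ := max F.p1.t0 F.p2.t0

/-- The coalescence time (meaningful when `tcFinite F`). -/
noncomputable def tcReal (F : CoalPair) : ℝ := sInf (coalSet F.p1 F.p2)

/-- The coalescence time is finite. -/
def tcFinite (F : CoalPair) : Prop := (coalSet F.p1 F.p2).Nonempty

/-- Inverse of `tanh`. -/
noncomputable def artanh (x : ℝ) : ℝ := Real.log ((1 + x) / (1 - x)) / 2

/-- The pod function in the `tanh` time variable. -/
noncomputable def podT (F : CoalPair) (x : ℝ) : ℝ :=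
  F.p2.f (artanh x) - F.p1.f (artanh x)

noncomputable def ttPlus (F : CoalPair) : ℝ := Real.tanh (tPlus F)

open Classical in
/-- `Ψ(t^c)`, with the convention `Ψ(∞) = 1`. -/
noncomputable def ttc (F : CoalPair) : ℝ :=
  if tcFinite F then Real.tanh (tcReal F) else 1

noncomputable def ttm (F : CoalPair) : ℝ := (ttPlus F + ttc F) / 2

/-- The standard pod of a coalescing pair. -/
noncomputable def stdPod (F : CoalPair) : ℝ → ℝ := fun x =>
  let a := ttPlus F
  let c := ttc F
  let m := ttm F
  let mid := podT F m + (1 - (c - m)) / 2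
  if x ≤ m - a then podT F (x + a)
  else if x ≤ 1/2 then
    podT F m + (x - (m - a)) * (mid - podT F m) / (1/2 - (m - a))
  else if x ≤ 1 - (c - m) then
    mid + (x - 1/2) * (podT F m - mid) / ((1 - (c - m)) - 1/2)
  else podT F (x - (1 - c))

/-- The pod-comparison functional Δ. -/
noncomputable def Delta (p q : ℝ → ℝ) : ℝ :=
  ∑' n : ℕ, (2:ℝ)⁻¹ ^ (n+2) *
    min (⨆ x : Set.Icc (((n:ℝ)+2)⁻¹) (1 - ((n:ℝ)+2)⁻¹), |1 / p x - 1 / q x|) 1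

/-- The Hausdorff-type function d̄ = max_i min_j d′. -/
noncomputable def dbar (F G : CoalPair) : ℝ :=
  max (min (dprime F.p1 G.p1) (dprime F.p1 G.p2))
      (min (dprime F.p2 G.p1) (dprime F.p2 G.p2))

/-- The metric d̃ = d̄ + Δ on 𝒞. -/
noncomputable def dtilde (F G : CoalPair) : ℝ :=
  dbar F G + Delta (stdPod F) (stdPod G)


/-- The (horizontal) diameter of the pod of a coalescing pair. -/
noncomputable def podDiam (F : CoalPair) : ℝ :=
  ⨆ x : Set.Ioo (ttPlus F) (ttc F), podT F x

/-- The dimension of a pod: the max of its length and its diameter. -/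
noncomputable def podDim (F : CoalPair) : ℝ :=
  max (tcReal F - tPlus F) (podDiam F)



lemma tanh_hasDerivAt (x : ℝ) : HasDerivAt Real.tanh (1 / Real.cosh x ^ 2) x := by
  have h := (Real.hasDerivAt_sinh x).div (Real.hasDerivAt_cosh x) (Real.cosh_pos x).ne'
  have heq : Real.tanh = fun y => Real.sinh y / Real.cosh y :=
    funext fun y => Real.tanh_eq_sinh_div_cosh y
  rw [heq]
  convert h using 1
  iterate 3 rfl
  have h2 := Real.cosh_sq_sub_sinh_sq x
  have h3 := (Real.cosh_pos x).ne'
  field_simp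
  nlinarith [Real.cosh_pos x]

lemma tanh_strictMono : StrictMono Real.tanh :=
  strictMono_of_deriv_pos fun x => by
    rw [(tanh_hasDerivAt x).deriv]; positivity

lemma tanh_lipschitz (a b : ℝ) : |Real.tanh a - Real.tanh b| ≤ |a - b| := by
  have h : LipschitzWith 1 Real.tanh := by
    apply lipschitzWith_of_nnnorm_deriv_le (fun x => (tanh_hasDerivAt x).differentiableAt)
    intro x
    rw [(tanh_hasDerivAt x).deriv, ← NNReal.coe_le_coe, coe_nnnorm, Real.norm_eq_abs]
    rw [abs_of_pos (by positivity), NNReal.coe_one, div_le_one (by positivity)]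
    nlinarith [Real.one_le_cosh x]
  have := h.dist_le_mul a b
  simpa [Real.dist_eq] using this

lemma artanh_tanh (x : ℝ) : artanh (Real.tanh x) = x := by
  have hc := Real.cosh_pos x
  have h1 : 1 + Real.tanh x = Real.exp x / Real.cosh x := by
    rw [Real.tanh_eq_sinh_div_cosh, ← Real.cosh_add_sinh x]; field_simp
  have h2 : 1 - Real.tanh x = Real.exp (-x) / Real.cosh x := by
    rw [Real.tanh_eq_sinh_div_cosh, ← Real.cosh_sub_sinh x]; field_simp
  rw [artanh, h1, h2, div_div_div_cancel_right₀, ← Real.exp_sub]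
  · rw [Real.log_exp]; ring
  · exact hc.ne'

lemma tanh_lt_one (x : ℝ) : Real.tanh x < 1 := by
  rw [Real.tanh_eq_sinh_div_cosh, div_lt_one (Real.cosh_pos x)]
  exact Real.sinh_lt_cosh x

lemma artanh_mono {x y : ℝ} (hx : -1 < x) (hxy : x ≤ y) (hy : y < 1) :
    artanh x ≤ artanh y := by
  have hx1 : (0:ℝ) < 1 - x := by linarith
  have hy1 : (0:ℝ) < 1 - y := by linarith
  have hx0 : (0:ℝ) < 1 + x := by linarith
  have hy0 : (0:ℝ) < 1 + y := by linarith
  apply div_le_div_of_nonneg_right _ two_pos.le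
  apply Real.log_le_log (by positivity)
  rw [div_le_div_iff₀ hx1 hy1]; nlinarith

lemma artanh_continuousOn {a c : ℝ} (ha : -1 < a) (hc : c < 1) :
    ContinuousOn artanh (Set.Icc a c) := by
  have h1 : ∀ x ∈ Set.Icc a c, (1 - x) ≠ 0 := by
    intro x hx; have := hx.2; intro h; nlinarith
  have h2 : ∀ x ∈ Set.Icc a c, (1 + x) / (1 - x) ≠ 0 := by
    intro x hx
    have hx1 : (0:ℝ) < 1 - x := by have := hx.2; linarith
    have hx0 : (0:ℝ) < 1 + x := by have := hx.1; linarith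
    positivity
  exact (((continuousOn_const.add continuousOn_id).div
    (continuousOn_const.sub continuousOn_id) h1).log h2).div_const 2


lemma tPlus_le_tcReal (F : CoalPair) (hF : tcFinite F) : tPlus F ≤ tcReal F :=
  le_csInf hF fun t ht => ht.1.le

lemma ttc_eq (F : CoalPair) (hF : tcFinite F) : ttc F = Real.tanh (tcReal F) := if_pos hF

lemma tPlus_nonneg (F : CoalPair) : 0 ≤ tPlus F :=
  le_max_of_le_left F.p1.ht0.1

lemma coal_basic (F : CoalPair) (hF : tcFinite F) {σ : ℝ} (hdim : podDim F ≤ σ) :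
    0 ≤ ttPlus F ∧ ttPlus F ≤ ttc F ∧ ttc F < 1 ∧ ttc F - ttPlus F ≤ σ := by
  have h1 := tPlus_le_tcReal F hF
  have h0 := tPlus_nonneg F
  rw [ttc_eq F hF, ttPlus]
  refine ⟨?_, ?_, tanh_lt_one _, ?_⟩
  · have := tanh_strictMono.monotone h0
    rwa [Real.tanh_zero] at this
  · exact tanh_strictMono.monotone h1
  · have h2 : tcReal F - tPlus F ≤ σ := le_trans (le_max_left _ _) hdim
    have h3 := tanh_lipschitz (tcReal F) (tPlus F)
    rw [abs_of_nonneg (sub_nonneg.2 (tanh_strictMono.monotone h1)),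
      abs_of_nonneg (by linarith : (0:ℝ) ≤ tcReal F - tPlus F)] at h3
    linarith

lemma podT_mid_bounds (F : CoalPair) (hF : tcFinite F) {σ : ℝ} (hσ : 0 < σ)
    (hdim : podDim F ≤ σ) : 0 ≤ podT F (ttm F) ∧ podT F (ttm F) ≤ σ := by
  obtain ⟨ha0, hac, hc1, _⟩ := coal_basic F hF hdim
  have hm1 : ttm F < 1 := by rw [ttm]; linarith
  have hm_ge : ttPlus F ≤ ttm F := by rw [ttm]; linarith
  have hm_le : ttm F ≤ ttc F := by rw [ttm]; linarith
  have hat : artanh (ttPlus F) = tPlus F := artanh_tanh _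
  have hnonneg : 0 ≤ podT F (ttm F) := by
    rw [podT]
    have h := F.ordered (artanh (ttm F)) ?_
    · linarith
    · show tPlus F ≤ artanh (ttm F)
      rw [← hat]
      exact artanh_mono (by linarith) hm_ge hm1
  refine ⟨hnonneg, ?_⟩
  rcases eq_or_lt_of_le hac with heq | hlt
  · -- ttPlus = ttc : coalescence exactly at time tPlus, podT = 0
    have htc : tcReal F = tPlus F := by
      apply tanh_strictMono.injective
      rw [← ttc_eq F hF, ← heq]; rfl
    have hm_eq : ttm F = ttPlus F := by rw [ttm, ← heq]; ring
    have hzero : podT F (ttm F) = 0 := by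
      rw [podT, hm_eq, hat]
      have hg : Continuous fun t => F.p2.f t - F.p1.f t := F.p2.hf.sub F.p1.hf
      have hbdd : BddBelow (coalSet F.p1 F.p2) := ⟨tPlus F, fun t ht => ht.1.le⟩
      have hmem := csInf_mem_closure hF hbdd
      have hsub : coalSet F.p1 F.p2 ⊆ {t | F.p2.f t - F.p1.f t = 0} := by
        intro t ht
        simp only [Set.mem_setOf_eq, ht.2, sub_self]
      have hclosed : IsClosed {t : ℝ | F.p2.f t - F.p1.f t = 0} :=
        isClosed_eq hg continuous_const
      have h2 := hclosed.closure_subset_iff.2 hsub hmem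
      rw [show sInf (coalSet F.p1 F.p2) = tcReal F from rfl, htc] at h2
      exact h2
    rw [hzero]; exact hσ.le
  · have hm_mem : ttm F ∈ Set.Ioo (ttPlus F) (ttc F) := by
      constructor <;> rw [ttm] <;> linarith
    have hcont : ContinuousOn (podT F) (Set.Icc (ttPlus F) (ttc F)) := by
      have hart := artanh_continuousOn (show (-1:ℝ) < ttPlus F by linarith) hc1
      exact (F.p2.hf.comp_continuousOn hart).sub (F.p1.hf.comp_continuousOn hart)
    have hbdd : BddAbove (Set.range fun x : Set.Ioo (ttPlus F) (ttc F) => podT F x) := by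
      rw [← Set.image_eq_range]
      exact (isCompact_Icc.bddAbove_image hcont).mono
        (Set.image_mono Set.Ioo_subset_Icc_self)
    have hle : podT F (ttm F) ≤ podDiam F :=
      le_ciSup hbdd (⟨ttm F, hm_mem⟩ : Set.Ioo (ttPlus F) (ttc F))
    exact hle.trans (le_trans (le_max_right _ _) hdim)


lemma branch2_bound {σ L D x : ℝ} (hσ : 0 < σ) (hσ2 : σ ≤ 1/2)
    (hL0 : 0 ≤ L) (hLσ : L ≤ σ) (hD0 : 0 ≤ D) (hDσ : D ≤ σ)
    (hxl : L/2 ≤ x) (hxr : x ≤ 1/2) :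
    |D + (x - L/2) * (D + (1 - L/2)/2 - D) / (1/2 - L/2) - x| ≤ σ := by
  have hC : (0:ℝ) < 1/2 - L/2 := by linarith
  set q := (x - L/2) * (D + (1 - L/2)/2 - D) / (1/2 - L/2) with hqdef
  have hub : q ≤ x - L/2 + L/4 := by
    rw [hqdef, div_le_iff₀ hC]
    nlinarith [mul_nonneg hL0 (by linarith : (0:ℝ) ≤ 1/2 - x)]
  have hlb : x - L/2 ≤ q := by
    rw [hqdef, le_div_iff₀ hC]
    nlinarith [mul_nonneg (by linarith : (0:ℝ) ≤ x - L/2) hL0]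
  rw [abs_le]
  constructor <;> linarith

lemma branch3_bound {σ L D x : ℝ} (hσ : 0 < σ) (hσ2 : σ ≤ 1/2)
    (hL0 : 0 ≤ L) (hLσ : L ≤ σ) (hD0 : 0 ≤ D) (hDσ : D ≤ σ)
    (hxl : 1/2 < x) (hxr : x ≤ 1 - L/2) :
    |D + (1 - L/2)/2 + (x - 1/2) * (D - (D + (1 - L/2)/2)) / (1 - L/2 - 1/2) - (1-x)| ≤ σ := by
  have hC : (0:ℝ) < 1 - L/2 - 1/2 := by linarith
  set q := (x - 1/2) * (D - (D + (1 - L/2)/2)) / (1 - L/2 - 1/2) with hqdef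
  have hub : q ≤ -(x - 1/2) := by
    rw [hqdef, div_le_iff₀ hC]
    nlinarith [mul_nonneg (by linarith : (0:ℝ) ≤ x - 1/2) hL0]
  have hlb : -(x - 1/2) - L/4 ≤ q := by
    rw [hqdef, le_div_iff₀ hC]
    nlinarith [mul_nonneg hL0 (by linarith : (0:ℝ) ≤ 1 - L/2 - x)]
  rw [abs_le]
  constructor <;> linarith

lemma stdPod_close (F : CoalPair) (hF : tcFinite F) {σ δ x : ℝ}
    (hσ : 0 < σ) (hσ2 : σ ≤ 1/2) (hdim : podDim F ≤ σ)
    (hδ1 : 4*σ ≤ δ) (hδ2 : δ ≤ 1/2) (hx : x ∈ Set.Icc δ (1 - δ)) :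
    |stdPod F x - min x (1-x)| ≤ σ := by
  obtain ⟨ha0, hac, hc1, hL⟩ := coal_basic F hF hdim
  obtain ⟨hD0, hDσ⟩ := podT_mid_bounds F hF hσ hdim
  have hx1 := hx.1
  have hx2 := hx.2
  have e1 : ttm F - ttPlus F = (ttc F - ttPlus F)/2 := by rw [ttm]; ring
  have e2 : ttc F - ttm F = (ttc F - ttPlus F)/2 := by rw [ttm]; ring
  simp only [stdPod]
  rw [e1, e2]
  rw [if_neg (by push_neg; linarith : ¬ x ≤ (ttc F - ttPlus F)/2)]
  by_cases hhalf : x ≤ 1/2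
  · rw [if_pos hhalf, min_eq_left (by linarith : x ≤ 1 - x)]
    exact branch2_bound hσ hσ2 (by linarith) hL hD0 hDσ (by linarith) hhalf
  · push_neg at hhalf
    rw [if_neg (by push_neg; exact hhalf), if_pos (by linarith : x ≤ 1 - (ttc F - ttPlus F)/2),
      min_eq_right (by linarith : 1 - x ≤ x)]
    exact branch3_bound hσ hσ2 (by linarith) hL hD0 hDσ hhalf (by linarith)


lemma geom_summable : Summable (fun n : ℕ => (2:ℝ)⁻¹ ^ (n+2)) := by
  have h := summable_geometric_two.mul_right (1/4 : ℝ)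
  refine h.congr fun n => ?_
  rw [pow_add]
  norm_num

lemma term_bound {σ : ℝ} (hσ : σ ∈ Set.Ioc (0:ℝ) (1/2)) (F G : CoalPair)
    (hF : tcFinite F) (hG : tcFinite G) (hdF : podDim F ≤ σ) (hdG : podDim G ≤ σ) (n : ℕ) :
    min (⨆ x : Set.Icc (((n:ℝ)+2)⁻¹) (1 - ((n:ℝ)+2)⁻¹),
        |1 / stdPod F x - 1 / stdPod G x|) 1 ≤ min (16 * σ * ((n:ℝ)+2)^2) 1 := by
  set δ := ((n:ℝ)+2)⁻¹ with hδdef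
  have hn2 : (2:ℝ) ≤ (n:ℝ)+2 := by
    have : (0:ℝ) ≤ (n:ℝ) := Nat.cast_nonneg n
    linarith
  have hδpos : 0 < δ := by positivity
  have hσpos := hσ.1
  have hδmul : δ * ((n:ℝ)+2) = 1 := inv_mul_cancel₀ (by linarith)
  have hδ2 : δ ≤ 1/2 := by
    rw [hδdef, show (1:ℝ)/2 = 2⁻¹ by norm_num]
    exact inv_anti₀ two_pos hn2
  by_cases hcase : 4*σ ≤ δ
  · apply min_le_min _ le_rfl
    haveI : Nonempty ↥(Set.Icc δ (1-δ)) := ⟨⟨δ, le_refl δ, by linarith⟩⟩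
    apply ciSup_le
    rintro ⟨x, hx⟩
    have hpF := stdPod_close F hF hσ.1 hσ.2 hdF hcase hδ2 hx
    have hpG := stdPod_close G hG hσ.1 hσ.2 hdG hcase hδ2 hx
    have h1 := abs_le.1 hpF
    have h2 := abs_le.1 hpG
    have hμ : δ ≤ min x (1-x) := le_min hx.1 (by linarith [hx.2])
    have hpFl : 3*δ/4 ≤ stdPod F x := by linarith [h1.2]
    have hpGl : 3*δ/4 ≤ stdPod G x := by linarith [h2.2]
    have hFpos : 0 < stdPod F (x:ℝ) := by linarith
    have hGpos : 0 < stdPod G (x:ℝ) := by linarith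
    have hprod : 0 < stdPod F (x:ℝ) * stdPod G (x:ℝ) := mul_pos hFpos hGpos
    have heq : 1 / stdPod F (x:ℝ) - 1 / stdPod G (x:ℝ)
        = (stdPod G x - stdPod F x) / (stdPod F x * stdPod G x) := by
      field_simp
    rw [heq, abs_div, abs_of_pos hprod, div_le_iff₀ hprod]
    have hdiff : |stdPod G (x:ℝ) - stdPod F (x:ℝ)| ≤ 2*σ := by
      rw [abs_le]; constructor <;> linarith [h1.1, h1.2, h2.1, h2.2]
    have hpq : (3*δ/4)*(3*δ/4) ≤ stdPod F (x:ℝ) * stdPod G (x:ℝ) :=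
      mul_le_mul hpFl hpGl (by positivity) (by linarith)
    have hsq : (δ * ((n:ℝ)+2))^2 = 1 := by rw [hδmul]; norm_num
    have hrhs : 2*σ ≤ 16 * σ * ((n:ℝ)+2)^2 * (stdPod F x * stdPod G x) := by
      have hkey := mul_le_mul_of_nonneg_left hpq
        (by positivity : (0:ℝ) ≤ 16 * σ * ((n:ℝ)+2)^2)
      nlinarith [hσ.1, hsq]
    linarith [hdiff]
  · push_neg at hcase
    have hgt : (1:ℝ) < 4*σ*((n:ℝ)+2) := by
      have := mul_lt_mul_of_pos_right hcase (by linarith : (0:ℝ) < (n:ℝ)+2)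
      rwa [hδmul] at this
    have h1 : (1:ℝ) ≤ 16*σ*((n:ℝ)+2)^2 := by nlinarith
    rw [min_eq_right h1]
    exact min_le_right _ _

/-- if two pods have dimension at most σ then the Δ distance of their
standard pods is at most φ(σ), where φ(σ) → 0 as σ → 0. -/
theorem Delta_small_for_small_pods :
    ∃ φ : ℝ → ℝ, (∀ σ, 0 ≤ φ σ) ∧
      Filter.Tendsto φ (nhdsWithin 0 (Set.Ioi 0)) (nhds 0) ∧
      ∀ σ ∈ Set.Ioc (0:ℝ) (1/2), ∀ F G : CoalPair,
        tcFinite F → tcFinite G → podDim F ≤ σ → podDim G ≤ σ →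
        Delta (stdPod F) (stdPod G) ≤ φ σ := by
  refine ⟨fun σ => ∑' n : ℕ, (2:ℝ)⁻¹ ^ (n+2) * min (16 * |σ| * ((n:ℝ)+2)^2) 1, ?_, ?_, ?_⟩
  · intro σ
    exact tsum_nonneg fun n => mul_nonneg (by positivity) (le_min (by positivity) zero_le_one)
  · have h := tendsto_tsum_of_dominated_convergence
      (𝓕 := nhdsWithin (0:ℝ) (Set.Ioi 0))
      (f := fun σ (n : ℕ) => (2:ℝ)⁻¹ ^ (n+2) * min (16 * |σ| * ((n:ℝ)+2)^2) 1)
      (g := fun _ : ℕ => (0:ℝ)) (bound := fun n : ℕ => (2:ℝ)⁻¹ ^ (n+2))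
      geom_summable ?_ ?_
    · rw [tsum_zero] at h
      exact h
    · intro k
      have hcont : Continuous fun σ : ℝ =>
          (2:ℝ)⁻¹ ^ (k+2) * min (16 * |σ| * ((k:ℝ)+2)^2) 1 :=
        continuous_const.mul
          (((continuous_const.mul continuous_abs).mul continuous_const).min continuous_const)
      have h0 : (2:ℝ)⁻¹ ^ (k+2) * min (16 * |(0:ℝ)| * ((k:ℝ)+2)^2) 1 = 0 := by
        simp
      have := hcont.tendsto 0
      rw [h0] at this
      exact this.mono_left nhdsWithin_le_nhds
    · refine Eventually.of_forall fun σ k => ?_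
      rw [Real.norm_eq_abs,
        abs_of_nonneg (mul_nonneg (by positivity) (le_min (by positivity) zero_le_one))]
      exact mul_le_of_le_one_right (by positivity) (min_le_right _ _)
  · intro σ hσ F G hF hG hdF hdG
    rw [Delta]
    have hs1 : Summable fun n : ℕ => (2:ℝ)⁻¹ ^ (n+2) *
        min (⨆ x : Set.Icc (((n:ℝ)+2)⁻¹) (1 - ((n:ℝ)+2)⁻¹),
          |1 / stdPod F x - 1 / stdPod G x|) 1 := by
      refine Summable.of_nonneg_of_le
        (fun n => mul_nonneg (by positivity)
          (le_min (Real.iSup_nonneg fun x => abs_nonneg _) zero_le_one))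
        (fun n => mul_le_of_le_one_right (by positivity) (min_le_right _ _)) geom_summable
    have hs2 : Summable fun n : ℕ => (2:ℝ)⁻¹ ^ (n+2) * min (16 * |σ| * ((n:ℝ)+2)^2) 1 := by
      refine Summable.of_nonneg_of_le
        (fun n => mul_nonneg (by positivity) (le_min (by positivity) zero_le_one))
        (fun n => mul_le_of_le_one_right (by positivity) (min_le_right _ _)) geom_summable
    refine Summable.tsum_le_tsum (fun n => ?_) hs1 hs2
    apply mul_le_mul_of_nonneg_left _ (by positivity)
    rw [abs_of_pos hσ.1]
    exact term_bound hσ F G hF hG hdF hdG n
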